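/- Lemma 1 (effect of PCA rank on estimated canonical correlations): For all ranks 1 ≤ r_x < r̃_1 ≤ p_x and 1 ≤ r_y < r̃_2 ≤ p_y, and every index i = 1, …, min(r_x, r_y), the i-th estimated canonical correlation is monotone in the PCA ranks: k̂_i(r̃_1, r̃_2) ≥ k̂_i(r_x, r_y). -/

import Mathlib

open Matrix

/-- The `i`-th largest eigenvalue (0-indexed) of a Hermitian matrix. -/
noncomputable def eigDesc {n : ℕ} {A : Matrix (Fin n) (Fin n) ℂ} (hA : A.IsHermitian)
    (i : Fin n) : ℝ :=
  hA.eigenvalues (Tuple.sort hA.eigenvalues i.rev)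

/-- The `i`-th largest estimated canonical correlation `k̂_i(r_x, r_y)` obtained after PCA
rank reduction to ranks `r_x` and `r_y`: the `i`-th largest singular value of
`G = V_x(:,1:r_x)ᴴ V_y(:,1:r_y)`, i.e. the square root of the `i`-th largest eigenvalue
of `G Gᴴ`. -/
noncomputable def kHat {M px py : ℕ} (Vx : Matrix (Fin M) (Fin px) ℂ)
    (Vy : Matrix (Fin M) (Fin py) ℂ) (rx ry : ℕ) (hrx : rx ≤ px) (hry : ry ≤ py)
    (i : Fin rx) : ℝ :=
  Real.sqrt (eigDesc (isHermitian_mul_conjTranspose_self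
    ((Vx.submatrix id (Fin.castLE hrx))ᴴ * (Vy.submatrix id (Fin.castLE hry)))) i)

private lemma inner_eq_dot {n : ℕ} (x y : EuclideanSpace ℂ (Fin n)) :
    (inner ℂ x y : ℂ) = star (x : Fin n → ℂ) ⬝ᵥ (y : Fin n → ℂ) := by
  simp [PiLp.inner_apply, dotProduct, RCLike.inner_apply]
  exact Finset.sum_congr rfl fun _ _ => mul_comm _ _

private lemma repr_mulVec {n : ℕ} {A : Matrix (Fin n) (Fin n) ℂ} (hA : A.IsHermitian)
    (x : EuclideanSpace ℂ (Fin n)) (k : Fin n) :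
    hA.eigenvectorBasis.repr (WithLp.toLp 2 (A *ᵥ x : Fin n → ℂ)) k
      = (hA.eigenvalues k : ℂ) * hA.eigenvectorBasis.repr x k := by
  rw [OrthonormalBasis.repr_apply_apply, OrthonormalBasis.repr_apply_apply]
  rw [inner_eq_dot, inner_eq_dot, WithLp.ofLp_toLp, dotProduct_mulVec]
  have h2 : star ((hA.eigenvectorBasis k : Fin n → ℂ)) ᵥ* A
      = star (A *ᵥ (hA.eigenvectorBasis k : Fin n → ℂ)) := by
    rw [star_mulVec, hA.eq]
  rw [h2]
  erw [hA.mulVec_eigenvectorBasis]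
  rw [star_smul, smul_dotProduct]
  simp [Complex.real_smul]

private lemma quad_eq_sum {n : ℕ} {A : Matrix (Fin n) (Fin n) ℂ} (hA : A.IsHermitian)
    (x : EuclideanSpace ℂ (Fin n)) :
    (star (x : Fin n → ℂ) ⬝ᵥ (A *ᵥ x)).re
      = ∑ k, hA.eigenvalues k * ‖hA.eigenvectorBasis.repr x k‖^2 := by
  have h1 : (star (x : Fin n → ℂ) ⬝ᵥ (A *ᵥ x))
      = inner ℂ x (WithLp.toLp 2 (A *ᵥ x : Fin n → ℂ)) := (inner_eq_dot x (WithLp.toLp 2 (A *ᵥ x))).symm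
  rw [h1, ← hA.eigenvectorBasis.repr.inner_map_map x, PiLp.inner_apply]
  simp only [repr_mulVec hA, RCLike.inner_apply]
  rw [Complex.re_sum]
  refine Finset.sum_congr rfl fun k _ => ?_
  set z := hA.eigenvectorBasis.repr x k
  have : (starRingEnd ℂ) z * ((hA.eigenvalues k : ℂ) * z)
      = ((hA.eigenvalues k * ‖z‖^2 : ℝ) : ℂ) := by
    push_cast
    rw [mul_comm ((starRingEnd ℂ) z), mul_assoc, Complex.mul_conj']
  rw [mul_comm, this, Complex.ofReal_re]

private lemma norm_sq_eq_sum_repr {n : ℕ}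
    (b : OrthonormalBasis (Fin n) ℂ (EuclideanSpace ℂ (Fin n)))
    (x : EuclideanSpace ℂ (Fin n)) : ‖x‖^2 = ∑ k, ‖b.repr x k‖^2 := by
  rw [← b.repr.norm_map x, EuclideanSpace.norm_eq, Real.sq_sqrt (by positivity)]

private lemma repr_eq_zero_of_mem_span {n : ℕ}
    (b : OrthonormalBasis (Fin n) ℂ (EuclideanSpace ℂ (Fin n)))
    (S : Set (Fin n)) {x : EuclideanSpace ℂ (Fin n)}
    (hx : x ∈ Submodule.span ℂ (b '' S)) {k : Fin n} (hk : k ∉ S) :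
    b.repr x k = 0 := by
  rw [← b.coe_toBasis] at hx
  have hsupp := Module.Basis.repr_support_subset_of_mem_span b.toBasis S hx
  rw [← b.coe_toBasis_repr_apply]
  by_contra h
  exact hk (hsupp (Finsupp.mem_support_iff.2 h))

private lemma finrank_span_image {n : ℕ}
    (b : OrthonormalBasis (Fin n) ℂ (EuclideanSpace ℂ (Fin n)))
    (S : Finset (Fin n)) :
    Module.finrank ℂ (Submodule.span ℂ (b '' (S : Set (Fin n)))) = S.card := by
  have hli : LinearIndependent ℂ (fun s : S => b s) :=
    (b.orthonormal.linearIndependent).comp _ Subtype.val_injective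
  have hr : Set.range (fun s : S => b s) = b '' (S : Set (Fin n)) := by
    ext y; simp
  rw [← hr, finrank_span_eq_card hli, Fintype.card_coe]

private lemma le_eigDesc_of_subspace {n : ℕ} {A : Matrix (Fin n) (Fin n) ℂ}
    (hA : A.IsHermitian) (i : Fin n) (r : ℝ) (W : Submodule ℂ (EuclideanSpace ℂ (Fin n)))
    (hdim : (i : ℕ) + 1 ≤ Module.finrank ℂ W)
    (hW : ∀ x ∈ W, r * ‖x‖^2 ≤ (star (x : Fin n → ℂ) ⬝ᵥ (A *ᵥ x)).re) :
    r ≤ eigDesc hA i := by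
  classical
  set σ := Tuple.sort hA.eigenvalues with hσ
  set b := hA.eigenvectorBasis with hb
  set S : Finset (Fin n) := Finset.image σ (Finset.Iic i.rev) with hS
  set U := Submodule.span ℂ (b '' (S : Set (Fin n))) with hU
  have hcardS : S.card = n - i := by
    rw [hS, Finset.card_image_of_injective _ σ.injective, Fin.card_Iic, Fin.val_rev]
    omega
  have hUdim : Module.finrank ℂ U = n - i := by rw [hU, finrank_span_image, hcardS]
  have hsum := Submodule.finrank_sup_add_finrank_inf_eq W U
  have hle : Module.finrank ℂ ↥(W ⊔ U) ≤ n := by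
    simpa using (Submodule.finrank_le (W ⊔ U))
  have hpos : 0 < Module.finrank ℂ ↥(W ⊓ U) := by
    have := i.isLt; omega
  have : Nontrivial ↥(W ⊓ U) := Module.nontrivial_of_finrank_pos hpos
  obtain ⟨z, hz0⟩ := exists_ne (0 : ↥(W ⊓ U))
  set y : EuclideanSpace ℂ (Fin n) := (z : EuclideanSpace ℂ (Fin n)) with hy
  have hyW : y ∈ W := z.2.1
  have hyU : y ∈ U := z.2.2
  have hyne : y ≠ 0 := fun h => hz0 (Subtype.ext h)
  have hnormpos : (0:ℝ) < ‖y‖^2 := pow_pos (norm_pos_iff.mpr hyne) 2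
  have hub : (star (y : Fin n → ℂ) ⬝ᵥ (A *ᵥ y)).re ≤ eigDesc hA i * ‖y‖^2 := by
    rw [quad_eq_sum hA y, norm_sq_eq_sum_repr b y, Finset.mul_sum]
    refine Finset.sum_le_sum fun k _ => ?_
    by_cases hk : k ∈ S
    · obtain ⟨j, hj, rfl⟩ := Finset.mem_image.mp hk
      have : hA.eigenvalues (σ j) ≤ eigDesc hA i :=
        Tuple.monotone_sort hA.eigenvalues (Finset.mem_Iic.mp hj)
      exact mul_le_mul_of_nonneg_right this (by positivity)
    · rw [repr_eq_zero_of_mem_span b _ hyU hk]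
      simp
  have hlb := hW y hyW
  have : r * ‖y‖^2 ≤ eigDesc hA i * ‖y‖^2 := hlb.trans hub
  exact le_of_mul_le_mul_right (by simpa [mul_comm] using this) hnormpos

private lemma exists_subspace_eigDesc {n : ℕ} {A : Matrix (Fin n) (Fin n) ℂ}
    (hA : A.IsHermitian) (i : Fin n) :
    ∃ W : Submodule ℂ (EuclideanSpace ℂ (Fin n)),
      Module.finrank ℂ W = (i : ℕ) + 1 ∧
      ∀ x ∈ W, eigDesc hA i * ‖x‖^2 ≤ (star (x : Fin n → ℂ) ⬝ᵥ (A *ᵥ x)).re := by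
  classical
  set σ := Tuple.sort hA.eigenvalues with hσ
  set b := hA.eigenvectorBasis with hb
  set S : Finset (Fin n) := Finset.image σ (Finset.Ici i.rev) with hS
  refine ⟨Submodule.span ℂ (b '' (S : Set (Fin n))), ?_, ?_⟩
  · rw [finrank_span_image, hS, Finset.card_image_of_injective _ σ.injective,
      Fin.card_Ici, Fin.val_rev]
    have := i.isLt; omega
  · intro x hx
    rw [quad_eq_sum hA x, norm_sq_eq_sum_repr b x, Finset.mul_sum]
    refine Finset.sum_le_sum fun k _ => ?_
    by_cases hk : k ∈ S
    · obtain ⟨j, hj, rfl⟩ := Finset.mem_image.mp hk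
      have : eigDesc hA i ≤ hA.eigenvalues (σ j) :=
        Tuple.monotone_sort hA.eigenvalues (Finset.mem_Ici.mp hj)
      exact mul_le_mul_of_nonneg_right this (by positivity)
    · rw [repr_eq_zero_of_mem_span b _ hx hk]
      simp

private noncomputable def pad {a c : ℕ} (h : a ≤ c) :
    EuclideanSpace ℂ (Fin a) →ₗ[ℂ] EuclideanSpace ℂ (Fin c) where
  toFun x := WithLp.toLp 2 fun k => if hk : (k : ℕ) < a then x ⟨k, hk⟩ else 0
  map_add' x y := by
    ext k
    by_cases hk : (k : ℕ) < a <;> simp [hk, PiLp.add_apply]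
  map_smul' c x := by
    ext k
    by_cases hk : (k : ℕ) < a <;> simp [hk, PiLp.smul_apply]

private lemma pad_castLE {a c : ℕ} (h : a ≤ c) (x : EuclideanSpace ℂ (Fin a)) (j : Fin a) :
    pad h x (Fin.castLE h j) = x j := by
  simp [pad]

private lemma pad_zero {a c : ℕ} (h : a ≤ c) (x : EuclideanSpace ℂ (Fin a)) (k : Fin c)
    (hk : ¬ (k : ℕ) < a) : pad h x k = 0 := by
  simp [pad, hk]

private lemma pad_injective {a c : ℕ} (h : a ≤ c) : Function.Injective (pad h) := by
  intro x y hxy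
  ext j
  have := congrArg (· (Fin.castLE h j)) hxy
  rwa [pad_castLE, pad_castLE] at this

private lemma sum_eq_sum_castLE {a c : ℕ} (h : a ≤ c) {M : Type*} [AddCommMonoid M]
    (g : Fin c → M) (hg : ∀ k : Fin c, ¬ (k : ℕ) < a → g k = 0) :
    ∑ k : Fin c, g k = ∑ j : Fin a, g (Fin.castLE h j) := by
  have hm : ∑ j : Fin a, g (Fin.castLE h j)
      = ∑ k ∈ Finset.univ.map (Fin.castLEEmb h), g k := by
    rw [Finset.sum_map]; rfl
  rw [hm]
  refine (Finset.sum_subset (Finset.subset_univ _) fun k _ hk => hg k fun hlt => hk ?_).symm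
  simp only [Finset.mem_map, Finset.mem_univ, true_and]
  exact ⟨⟨(k : ℕ), hlt⟩, by ext; simp⟩

private lemma sum_castLE_le {a c : ℕ} (h : a ≤ c) (g : Fin c → ℝ) (hg : ∀ k, 0 ≤ g k) :
    ∑ j : Fin a, g (Fin.castLE h j) ≤ ∑ k : Fin c, g k := by
  have hm : ∑ j : Fin a, g (Fin.castLE h j)
      = ∑ k ∈ Finset.univ.map (Fin.castLEEmb h), g k := by
    rw [Finset.sum_map]; rfl
  rw [hm]
  exact Finset.sum_le_sum_of_subset_of_nonneg (Finset.subset_univ _) fun k _ _ => hg k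

private lemma pad_norm_sq {a c : ℕ} (h : a ≤ c) (x : EuclideanSpace ℂ (Fin a)) :
    ‖pad h x‖^2 = ‖x‖^2 := by
  rw [EuclideanSpace.norm_eq, EuclideanSpace.norm_eq,
    Real.sq_sqrt (by positivity), Real.sq_sqrt (by positivity)]
  rw [sum_eq_sum_castLE h _ (fun k hk => by rw [pad_zero h x k hk]; simp)]
  exact Finset.sum_congr rfl fun j _ => by rw [pad_castLE]

private lemma quad_mul_conjTranspose {c d : ℕ} (N : Matrix (Fin c) (Fin d) ℂ)
    (y : Fin c → ℂ) :
    (star y ⬝ᵥ ((N * Nᴴ) *ᵥ y)).re = ∑ j, ‖(Nᴴ *ᵥ y) j‖^2 := by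
  rw [← mulVec_mulVec, dotProduct_mulVec]
  have h1 : star y ᵥ* N = star (Nᴴ *ᵥ y) := by
    rw [star_mulVec, conjTranspose_conjTranspose]
  rw [h1, dotProduct, Complex.re_sum]
  refine Finset.sum_congr rfl fun j _ => ?_
  simp [Pi.star_apply, ← Complex.normSq_eq_norm_sq, Complex.normSq_eq_conj_mul_self,
    Complex.sq_norm]
  rfl

/-- **Lemma 1.** The estimated canonical correlation coefficients increase with increasing
PCA ranks: for `1 ≤ r_x < r̃₁ ≤ p_x`, `1 ≤ r_y < r̃₂ ≤ p_y` and every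
`i = 1, …, min(r_x, r_y)`, one has `k̂_i(r̃₁, r̃₂) ≥ k̂_i(r_x, r_y)`. -/
theorem kHat_mono_of_rank_le {M px py : ℕ}
    (Vx : Matrix (Fin M) (Fin px) ℂ) (Vy : Matrix (Fin M) (Fin py) ℂ)
    (hVx : Vxᴴ * Vx = 1) (hVy : Vyᴴ * Vy = 1)
    {rx r1 ry r2 : ℕ}
    (hrx : 1 ≤ rx) (hrxr1 : rx < r1) (hr1 : r1 ≤ px)
    (hry : 1 ≤ ry) (hryr2 : ry < r2) (hr2 : r2 ≤ py)
    (i : ℕ) (hi : i < min rx ry) :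
    kHat Vx Vy r1 r2 hr1 hr2 ⟨i, by omega⟩ ≥
      kHat Vx Vy rx ry (by omega) (by omega) ⟨i, by omega⟩ := by
  have hrr1 : rx ≤ r1 := le_of_lt hrxr1
  have hrr2 : ry ≤ r2 := le_of_lt hryr2
  have hrxpx : rx ≤ px := by omega
  have hrypy : ry ≤ py := by omega
  set Gs := (Vx.submatrix id (Fin.castLE hrxpx))ᴴ * (Vy.submatrix id (Fin.castLE hrypy))
    with hGs
  set Gb := (Vx.submatrix id (Fin.castLE hr1))ᴴ * (Vy.submatrix id (Fin.castLE hr2))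
    with hGb
  rw [ge_iff_le]
  unfold kHat
  apply Real.sqrt_le_sqrt
  -- reduce to eigenvalue comparison
  obtain ⟨W, hWdim, hWq⟩ :=
    exists_subspace_eigDesc (isHermitian_mul_conjTranspose_self Gs) ⟨i, by omega⟩
  refine le_eigDesc_of_subspace _ _ _ (W.map (pad hrr1)) ?_ ?_
  · have := (Submodule.equivMapOfInjective _ (pad_injective hrr1) W).finrank_eq
    rw [← this, hWdim]
  · rintro y ⟨x, hxW, rfl⟩
    rw [pad_norm_sq]
    have hentry : ∀ (a : Fin rx) (j : Fin ry),
        Gb (Fin.castLE hrr1 a) (Fin.castLE hrr2 j) = Gs a j := fun a j => rfl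
    have hmv : ∀ j : Fin ry,
        (Gbᴴ *ᵥ (pad hrr1 x : Fin r1 → ℂ)) (Fin.castLE hrr2 j) = (Gsᴴ *ᵥ x) j := by
      intro j
      show ∑ k, Gbᴴ (Fin.castLE hrr2 j) k * pad hrr1 x k
        = ∑ a, Gsᴴ j a * x a
      rw [sum_eq_sum_castLE hrr1 _ (fun k hk => by rw [pad_zero hrr1 x k hk, mul_zero])]
      refine Finset.sum_congr rfl fun a _ => ?_
      rw [pad_castLE, conjTranspose_apply, conjTranspose_apply, hentry a j]
    calc eigDesc (isHermitian_mul_conjTranspose_self Gs) ⟨i, by omega⟩ * ‖x‖^2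
        ≤ (star (x : Fin rx → ℂ) ⬝ᵥ ((Gs * Gsᴴ) *ᵥ x)).re := hWq x hxW
      _ = ∑ j, ‖(Gsᴴ *ᵥ (x : Fin rx → ℂ)) j‖^2 := quad_mul_conjTranspose Gs x
      _ = ∑ j : Fin ry, ‖(Gbᴴ *ᵥ (pad hrr1 x : Fin r1 → ℂ)) (Fin.castLE hrr2 j)‖^2 := by
          exact Finset.sum_congr rfl fun j _ => by rw [hmv j]
      _ ≤ ∑ j : Fin r2, ‖(Gbᴴ *ᵥ (pad hrr1 x : Fin r1 → ℂ)) j‖^2 :=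
          sum_castLE_le hrr2
            (fun k => ‖(Gbᴴ *ᵥ (pad hrr1 x : Fin r1 → ℂ)) k‖^2) (fun k => by positivity)
      _ = (star (pad hrr1 x : Fin r1 → ℂ) ⬝ᵥ ((Gb * Gbᴴ) *ᵥ (pad hrr1 x : Fin r1 → ℂ))).re :=
          (quad_mul_conjTranspose Gb _).symm
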